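/- Let M = {a·(1,0) + b·(1/2, √3/2) : a, b ∈ ℤ} ⊂ ℝ² be the equilateral triangular lattice, and for R ≥ 0 let M_R = M ∩ {x ∈ ℝ² : ‖x‖ ≤ R}. Define n(R) = card(M_R) + 1 and m(R) = card{ {p, q} : p, q ∈ M_R, p ≠ q, ‖p − q‖ = 1 } + card(M_R). Then m(R)/n(R) tends to 4 as R → ∞. -/

import Mathlib

/-- The equilateral triangular lattice in the plane, generated by
`(1, 0)` and `(1/2, √3/2)`. -/
noncomputable def triLattice : Set (EuclideanSpace ℝ (Fin 2)) :=
  {x | ∃ a b : ℤ,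
    x = (a : ℝ) • ((WithLp.equiv 2 (Fin 2 → ℝ)).symm ![1, 0])
      + (b : ℝ) • ((WithLp.equiv 2 (Fin 2 → ℝ)).symm ![1/2, Real.sqrt 3 / 2])}

/-- The lattice points in the closed disk of radius `R`. -/
noncomputable def triLatticeBall (R : ℝ) : Set (EuclideanSpace ℝ (Fin 2)) :=
  triLattice ∩ {x | ‖x‖ ≤ R}

/-- The number of horospheres in the packing: one sphere per lattice point in the
disk of radius `R`, plus the horizontal plane `x₃ = 1`. -/
noncomputable def horoCount (R : ℝ) : ℕ := (triLatticeBall R).ncard + 1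

/-- The number of tangency points: pairs of lattice points at distance `1`
(tangent spheres), plus one tangency of each sphere with the plane `x₃ = 1`. -/
noncomputable def tangencyCount (R : ℝ) : ℕ :=
  Set.ncard {S : Set (EuclideanSpace ℝ (Fin 2)) |
    ∃ p q, p ∈ triLatticeBall R ∧ q ∈ triLatticeBall R ∧ p ≠ q ∧ ‖p - q‖ = 1 ∧
      S = {p, q}} + (triLatticeBall R).ncard


noncomputable def v1 : EuclideanSpace ℝ (Fin 2) := (WithLp.equiv 2 (Fin 2 → ℝ)).symm ![1, 0]
noncomputable def v2 : EuclideanSpace ℝ (Fin 2) := (WithLp.equiv 2 (Fin 2 → ℝ)).symm ![1/2, Real.sqrt 3 / 2]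
noncomputable def phi (p : ℤ × ℤ) : EuclideanSpace ℝ (Fin 2) := (p.1 : ℝ) • v1 + (p.2 : ℝ) • v2

def Qf (p : ℤ × ℤ) : ℤ := p.1^2 + p.1*p.2 + p.2^2

lemma Qf_nonneg (p : ℤ × ℤ) : 0 ≤ Qf p := by unfold Qf; nlinarith [sq_nonneg (p.1+p.2), sq_nonneg p.1, sq_nonneg p.2]

lemma phi_apply0 (p : ℤ × ℤ) : phi p 0 = (p.1 : ℝ) + (p.2 : ℝ)/2 := by
  simp [phi, v1, v2, PiLp.add_apply, PiLp.smul_apply]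
  ring

lemma phi_apply1 (p : ℤ × ℤ) : phi p 1 = (p.2 : ℝ) * (Real.sqrt 3 / 2) := by
  simp [phi, v1, v2, PiLp.add_apply, PiLp.smul_apply]

lemma norm_phi (p : ℤ × ℤ) : ‖phi p‖ = Real.sqrt ((Qf p : ℝ)) := by
  rw [EuclideanSpace.norm_eq]
  congr 1
  rw [Fin.sum_univ_two, phi_apply0, phi_apply1]
  have h3 : Real.sqrt 3 ^ 2 = 3 := Real.sq_sqrt (by norm_num)
  simp only [Real.norm_eq_abs, sq_abs]
  push_cast [Qf]
  nlinarith [h3]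

lemma phi_add (p q : ℤ × ℤ) : phi (p + q) = phi p + phi q := by
  obtain ⟨a, b⟩ := p; obtain ⟨c, d⟩ := q
  simp only [phi, Prod.mk_add_mk]
  push_cast
  module

lemma phi_sub (p q : ℤ × ℤ) : phi (p - q) = phi p - phi q := by
  obtain ⟨a, b⟩ := p; obtain ⟨c, d⟩ := q
  simp only [phi, Prod.mk_sub_mk]
  push_cast
  module

lemma phi_injective : Function.Injective phi := by
  intro p q h
  have h1 : phi p 1 = phi q 1 := by rw [h]
  have h0 : phi p 0 = phi q 0 := by rw [h]
  rw [phi_apply1, phi_apply1] at h1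
  rw [phi_apply0, phi_apply0] at h0
  have h3 : Real.sqrt 3 ≠ 0 := by positivity
  have hb : (p.2 : ℝ) = q.2 :=
    mul_right_cancel₀ (by positivity : (Real.sqrt 3 / 2) ≠ 0) h1
  have ha : (p.1 : ℝ) = q.1 := by linarith
  have : p.1 = q.1 := by exact_mod_cast ha
  have : p.2 = q.2 := by exact_mod_cast hb
  ext <;> assumption

lemma triLattice_eq_range : triLattice = Set.range phi := by
  ext x
  simp only [triLattice, Set.mem_setOf_eq, Set.mem_range]
  constructor
  · rintro ⟨a, b, rfl⟩; exact ⟨(a, b), rfl⟩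
  · rintro ⟨⟨a, b⟩, rfl⟩; exact ⟨a, b, rfl⟩

def AR (R : ℝ) : Set (ℤ × ℤ) := {p | ‖phi p‖ ≤ R}

lemma ball_eq_image (R : ℝ) : triLattice ∩ {x | ‖x‖ ≤ R} = phi '' AR R := by
  rw [triLattice_eq_range]
  ext x
  simp only [Set.mem_inter_iff, Set.mem_range, Set.mem_setOf_eq, Set.mem_image, AR]
  constructor
  · rintro ⟨⟨p, rfl⟩, hx⟩; exact ⟨p, hx, rfl⟩
  · rintro ⟨p, hp, rfl⟩; exact ⟨⟨p, rfl⟩, hp⟩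

lemma AR_bounded {R : ℝ} {p : ℤ × ℤ} (hp : p ∈ AR R) :
    p ∈ Set.Icc ((-⌊2*R⌋, -⌊2*R⌋) : ℤ × ℤ) ((⌊2*R⌋, ⌊2*R⌋) : ℤ × ℤ) := by
  have hn : (0:ℝ) ≤ ‖phi p‖ := norm_nonneg _
  have hR : (0:ℝ) ≤ R := le_trans hn hp
  have hQ : (Qf p : ℝ) ≤ R^2 := by
    have := (Real.sqrt_le_left hR).mp (by rw [← norm_phi]; exact hp)
    exact this
  have key : ∀ z : ℤ, (z:ℝ)^2 ≤ 4*R^2 → -⌊2*R⌋ ≤ z ∧ z ≤ ⌊2*R⌋ := by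
    intro z hz
    have h1 : (z:ℝ) ≤ 2*R := by nlinarith
    have h2 : (-z:ℝ) ≤ 2*R := by push_cast; nlinarith
    have h2' : -z ≤ ⌊2*R⌋ := Int.le_floor.mpr (by push_cast; nlinarith)
    have h1' : z ≤ ⌊2*R⌋ := Int.le_floor.mpr h1
    omega
  have hQ' : (p.1:ℝ)^2 + (p.1:ℝ)*(p.2:ℝ) + (p.2:ℝ)^2 ≤ R^2 := by
    have : ((Qf p : ℤ) : ℝ) = (p.1:ℝ)^2 + (p.1:ℝ)*(p.2:ℝ) + (p.2:ℝ)^2 := by push_cast [Qf]; ring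
    linarith [this ▸ hQ]
  have k1 := key p.1 (by nlinarith [sq_nonneg ((p.1:ℝ) + p.2), sq_nonneg (p.2:ℝ)])
  have k2 := key p.2 (by nlinarith [sq_nonneg ((p.1:ℝ) + p.2), sq_nonneg (p.1:ℝ)])
  constructor
  · exact ⟨k1.1, k2.1⟩
  · exact ⟨k1.2, k2.2⟩

lemma AR_finite (R : ℝ) : (AR R).Finite :=
  (Set.finite_Icc _ _).subset fun _ hp => AR_bounded hp

lemma ncard_AR_lower {R : ℝ} (hR : 1 ≤ R) : (R - 1)^2 ≤ ((AR R).ncard : ℝ) := by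
  set k : ℤ := ⌊R/2⌋ with hk
  have hk0 : 0 ≤ k := Int.floor_nonneg.mpr (by linarith)
  have hkR : (k:ℝ) ≤ R/2 := Int.floor_le _
  have hkR' : R/2 - 1 < (k:ℝ) := Int.sub_one_lt_floor _
  -- the box
  have hsub : (↑(Finset.Icc (-k) k ×ˢ Finset.Icc (-k) k) : Set (ℤ × ℤ)) ⊆ AR R := by
    rintro ⟨a, b⟩ hab
    simp only [Finset.coe_product, Set.mem_prod, Finset.mem_coe, Finset.mem_Icc] at hab
    obtain ⟨⟨ha1, ha2⟩, hb1, hb2⟩ := hab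
    have hQ : (Qf (a, b) : ℝ) ≤ R^2 := by
      have h1 : (a:ℝ)^2 ≤ (k:ℝ)^2 := by
        have : |(a:ℝ)| ≤ (k:ℝ) := by rw [abs_le]; constructor <;> exact_mod_cast (by assumption)
        nlinarith [abs_nonneg (a:ℝ), sq_abs (a:ℝ)]
      have h2 : (b:ℝ)^2 ≤ (k:ℝ)^2 := by
        have : |(b:ℝ)| ≤ (k:ℝ) := by rw [abs_le]; constructor <;> exact_mod_cast (by assumption)
        nlinarith [abs_nonneg (b:ℝ), sq_abs (b:ℝ)]
      have h3 : (a:ℝ)*(b:ℝ) ≤ (k:ℝ)^2 := by nlinarith [sq_nonneg ((a:ℝ) - b)]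
      have : (Qf (a,b) : ℝ) = (a:ℝ)^2 + (a:ℝ)*b + (b:ℝ)^2 := by push_cast [Qf]; ring
      rw [this]
      nlinarith
    show ‖phi (a, b)‖ ≤ R
    rw [norm_phi]
    rw [show R = Real.sqrt (R^2) by rw [Real.sqrt_sq (by linarith)]]
    exact Real.sqrt_le_sqrt hQ
  have hcard : ((2*k+1).toNat)^2 ≤ (AR R).ncard := by
    have := Set.ncard_le_ncard hsub (AR_finite R)
    rwa [Set.ncard_coe_finset, Finset.card_product, Int.card_Icc,
      show k + 1 - -k = 2*k+1 by ring, ← pow_two] at this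
  have hcast : (R - 1) ≤ (((2*k+1).toNat : ℤ) : ℝ) := by
    rw [Int.toNat_of_nonneg (by omega)]
    push_cast
    linarith
  calc (R-1)^2 ≤ ((((2*k+1).toNat : ℤ):ℝ))^2 := by nlinarith [hcast, (by linarith : (0:ℝ) ≤ R - 1)]
    _ ≤ ((AR R).ncard : ℝ) := by exact_mod_cast (by exact_mod_cast hcard : ((2*k+1).toNat:ℤ)^2 ≤ ((AR R).ncard:ℤ))

-- directions
def dd : Fin 3 → ℤ × ℤ := ![(1,0), (0,1), (1,-1)]

lemma norm_phi_dd (i : Fin 3) : ‖phi (dd i)‖ = 1 := by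
  fin_cases i <;>
    · rw [norm_phi]
      norm_num [Qf, dd]

lemma unit_classify {u : ℤ × ℤ} (h : ‖phi u‖ = 1) : (∃ i, u = dd i) ∨ (∃ i, u = -dd i) := by
  have hQ : Qf u = 1 := by
    have h2 : Real.sqrt ((Qf u : ℝ)) = 1 := by rw [← norm_phi]; exact h
    have : ((Qf u : ℤ):ℝ) = 1 := by
      have := congrArg (· ^ 2) h2
      simp only [one_pow] at this
      rwa [Real.sq_sqrt (by exact_mod_cast Qf_nonneg u)] at this
    exact_mod_cast this
  obtain ⟨a, b⟩ := u
  simp only [Qf] at hQ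
  have ha : a^2 ≤ 2 := by nlinarith [sq_nonneg (a+b), sq_nonneg b]
  have hb : b^2 ≤ 2 := by nlinarith [sq_nonneg (a+b), sq_nonneg a]
  have ha' : -1 ≤ a ∧ a ≤ 1 := by constructor <;> nlinarith
  have hb' : -1 ≤ b ∧ b ≤ 1 := by constructor <;> nlinarith
  obtain ⟨ha1, ha2⟩ := ha'; obtain ⟨hb1, hb2⟩ := hb'
  interval_cases a <;> interval_cases b <;>
    first
      | exact Or.inl ⟨0, by decide⟩
      | exact Or.inl ⟨1, by decide⟩
      | exact Or.inl ⟨2, by decide⟩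
      | exact Or.inr ⟨0, by decide⟩
      | exact Or.inr ⟨1, by decide⟩
      | exact Or.inr ⟨2, by decide⟩
      | (exfalso; norm_num at hQ)

def DR (R : ℝ) : Set ((ℤ × ℤ) × Fin 3) := {x | x.1 ∈ AR R ∧ x.1 + dd x.2 ∈ AR R}

lemma dd_add_ne (i j : Fin 3) : dd i + dd j ≠ 0 := by fin_cases i <;> fin_cases j <;> decide

lemma dd_inj : Function.Injective dd := by intro i j h; fin_cases i <;> fin_cases j <;> simp_all <;> exact absurd h (by decide)

lemma dd_ne_zero (i : Fin 3) : dd i ≠ 0 := by fin_cases i <;> decide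

noncomputable def fedge (x : (ℤ × ℤ) × Fin 3) : Set (EuclideanSpace ℝ (Fin 2)) :=
  {phi x.1, phi (x.1 + dd x.2)}

lemma fedge_injective : Function.Injective fedge := by
  rintro ⟨p, i⟩ ⟨q, j⟩ h
  simp only [fedge, Set.pair_eq_pair_iff] at h
  rcases h with ⟨h1, h2⟩ | ⟨h1, h2⟩
  · have hp : p = q := phi_injective h1
    have h3 : p + dd i = q + dd j := phi_injective h2
    rw [hp] at h3
    have hd : dd i = dd j := add_left_cancel h3
    rw [hp, dd_inj hd]
  · have hp : p = q + dd j := phi_injective h1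
    have hq : p + dd i = q := phi_injective h2
    exfalso
    apply dd_add_ne j i
    have h3 : q + (dd j + dd i) = q + 0 := by
      rw [add_zero, ← add_assoc, ← hp, hq]
    exact add_left_cancel h3

lemma fedge_image (R : ℝ) :
    fedge '' DR R = {S : Set (EuclideanSpace ℝ (Fin 2)) |
      ∃ p q, p ∈ phi '' AR R ∧ q ∈ phi '' AR R ∧ p ≠ q ∧ ‖p - q‖ = 1 ∧ S = {p, q}} := by
  ext S
  constructor
  · rintro ⟨⟨p, i⟩, ⟨hp, hpd⟩, rfl⟩
    refine ⟨phi p, phi (p + dd i), ⟨p, hp, rfl⟩, ⟨p + dd i, hpd, rfl⟩, ?_, ?_, rfl⟩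
    · intro h
      have : p = p + dd i := phi_injective h
      have : dd i = 0 := by
        have h3 : p + 0 = p + dd i := by rw [add_zero]; exact this
        exact (add_left_cancel h3).symm
      exact dd_ne_zero i this
    · rw [← phi_sub]
      have : p - (p + dd i) = -dd i := by abel
      rw [this, show phi (-dd i) = phi ((0,0) - dd i) by rw [show ((0,0) : ℤ × ℤ) = 0 from rfl, zero_sub], phi_sub]
      have h0 : phi (0, 0) = 0 := by simp [phi]
      rw [h0, zero_sub, norm_neg, norm_phi_dd]
  · rintro ⟨p, q, ⟨u, hu, rfl⟩, ⟨w, hw, rfl⟩, hne, hnorm, rfl⟩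
    rw [← phi_sub] at hnorm
    rcases unit_classify hnorm with ⟨i, hi⟩ | ⟨i, hi⟩
    · refine ⟨(w, i), ⟨hw, ?_⟩, ?_⟩
      · have : w + dd i = u := by rw [← hi]; abel
        rw [this]; exact hu
      · have : w + dd i = u := by rw [← hi]; abel
        simp only [fedge, this]
        exact Set.pair_comm _ _
    · refine ⟨(u, i), ⟨hu, ?_⟩, ?_⟩
      · have huw : u + dd i = w := by
          have h2 := congrArg (fun z => z + (w + dd i)) hi
          have e1 : u - w + (w + dd i) = u + dd i := by abel
          have e2 : -dd i + (w + dd i) = w := by abel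
          rw [e1, e2] at h2
          exact h2
        rw [huw]; exact hw
      · have huw : u + dd i = w := by
          have h2 := congrArg (fun z => z + (w + dd i)) hi
          have : u - w + (w + dd i) = u + dd i := by abel
          rw [this] at h2
          have : -dd i + (w + dd i) = w := by abel
          rwa [this] at h2
        simp only [fedge, huw]

lemma ncard_prod_univ_fin3 (s : Set (ℤ × ℤ)) :
    (s ×ˢ (Set.univ : Set (Fin 3))).ncard = 3 * s.ncard := by
  have h3 : Nat.card ((Set.univ : Set (Fin 3))) = 3 := by
    rw [Nat.card_congr (Equiv.Set.univ (Fin 3))]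
    simp [Nat.card_eq_fintype_card]
  rw [← Nat.card_coe_set_eq, ← Nat.card_coe_set_eq,
    Nat.card_congr (Equiv.Set.prod s Set.univ), Nat.card_prod, h3, mul_comm]

lemma DR_subset (R : ℝ) : DR R ⊆ AR R ×ˢ (Set.univ : Set (Fin 3)) :=
  fun x hx => ⟨hx.1, trivial⟩

lemma DR_superset (R : ℝ) : AR (R - 1) ×ˢ (Set.univ : Set (Fin 3)) ⊆ DR R := by
  rintro ⟨p, i⟩ ⟨hp, -⟩
  have hp' : ‖phi p‖ ≤ R - 1 := hp
  have hmem : p ∈ AR R := le_trans hp' (by linarith)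
  refine ⟨hmem, ?_⟩
  show ‖phi (p + dd i)‖ ≤ R
  calc ‖phi (p + dd i)‖ = ‖phi p + phi (dd i)‖ := by rw [phi_add]
    _ ≤ ‖phi p‖ + ‖phi (dd i)‖ := norm_add_le _ _
    _ = ‖phi p‖ + 1 := by rw [norm_phi_dd]
    _ ≤ R := by linarith

lemma DR_finite (R : ℝ) : (DR R).Finite :=
  ((AR_finite R).prod (Set.finite_univ)).subset (DR_subset R)

lemma DR_card_le (R : ℝ) : (DR R).ncard ≤ 3 * (AR R).ncard := by
  rw [← ncard_prod_univ_fin3]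
  exact Set.ncard_le_ncard (DR_subset R) ((AR_finite R).prod Set.finite_univ)

lemma DR_card_ge (R : ℝ) : 3 * (AR (R-1)).ncard ≤ (DR R).ncard := by
  rw [← ncard_prod_univ_fin3]
  exact Set.ncard_le_ncard (DR_superset R) (DR_finite R)

lemma count_Icc_real {s t : ℝ} (hs : 0 ≤ s) (hst : s ≤ t) :
    ((Finset.Icc (⌊s⌋ + 1) ⌊t⌋).card : ℝ) ≤ t - s + 1 := by
  rw [Int.card_Icc, show ⌊t⌋ + 1 - (⌊s⌋ + 1) = ⌊t⌋ - ⌊s⌋ by ring]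
  rcases le_or_gt ⌊s⌋ ⌊t⌋ with h | h
  · have h0 : ((⌊t⌋ - ⌊s⌋).toNat : ℤ) = ⌊t⌋ - ⌊s⌋ := Int.toNat_of_nonneg (by omega)
    have h1' : (((⌊t⌋ - ⌊s⌋).toNat : ℕ) : ℝ) = (⌊t⌋:ℝ) - (⌊s⌋:ℝ) := by
      exact_mod_cast congrArg (fun z : ℤ => (z:ℝ)) h0
    rw [h1']
    have h1 := Int.floor_le t
    have h2 := Int.lt_floor_add_one s
    linarith
  · rw [Int.toNat_of_nonpos (by omega)]
    push_cast
    linarith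

lemma sub_le_sqrt_sq_sub {s t : ℝ} (hs : 0 ≤ s) (hst : s ≤ t) :
    t - s ≤ Real.sqrt (t^2 - s^2) :=
  Real.le_sqrt_of_sq_le (by nlinarith)

lemma ann_bound {R : ℝ} (hR : 1 ≤ R) :
    (((AR R) \ (AR (R-1))).ncard : ℝ) ≤ 45 * R * Real.sqrt R := by
  classical
  set K : ℤ := ⌊2*R⌋ with hK
  set y : ℤ → ℝ := fun a => 4*R^2 - 3*(a:ℝ)^2 with hy
  set x : ℤ → ℝ := fun a => 4*(R-1)^2 - 3*(a:ℝ)^2 with hx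
  set t : ℤ → ℝ := fun a => Real.sqrt (max (y a) 0) with ht
  set s : ℤ → ℝ := fun a => Real.sqrt (max (x a) 0) with hs
  set M : ℤ → Finset ℤ := fun a =>
    (Finset.Icc (⌊s a⌋ + 1) ⌊t a⌋ ∪ Finset.Icc (-⌊t a⌋) (-⌊s a⌋ - 1)) ∪ {0} with hM
  set T : Finset (ℤ × ℤ) := (Finset.Icc (-K) K).biUnion (fun a => ({a} : Finset ℤ) ×ˢ M a) with hT
  -- basic facts
  have hts : ∀ a, s a ≤ t a := fun a =>
    Real.sqrt_le_sqrt (max_le_max (by simp only [hy, hx]; nlinarith) le_rfl)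
  have hs0 : ∀ a, 0 ≤ s a := fun a => Real.sqrt_nonneg _
  have ht0 : ∀ a, 0 ≤ t a := fun a => Real.sqrt_nonneg _
  -- step A : injection into T
  have hinj : Function.Injective (fun p : ℤ × ℤ => (p.1, 2*p.2 + p.1)) := by
    rintro ⟨a, b⟩ ⟨c, d⟩ h
    simp only [Prod.mk.injEq] at h
    obtain ⟨h1, h2⟩ := h
    subst h1
    exact Prod.ext rfl (by omega)
  have hsubset : (fun p : ℤ × ℤ => (p.1, 2*p.2 + p.1)) '' ((AR R) \ (AR (R-1))) ⊆ ↑T := by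
    rintro _ ⟨⟨a, b⟩, ⟨hp1, hp2⟩, rfl⟩
    simp only
    have hbd := AR_bounded hp1
    have haK : a ∈ Finset.Icc (-K) K := by
      simp only [Finset.mem_Icc]
      exact ⟨hbd.1.1, hbd.2.1⟩
    have hQle : ((Qf (a,b) : ℤ) : ℝ) ≤ R^2 :=
      (Real.sqrt_le_left (by linarith)).mp (by rw [← norm_phi]; exact hp1)
    have hQgt : (R-1)^2 < ((Qf (a,b) : ℤ) : ℝ) := by
      have h1 : R - 1 < ‖phi (a,b)‖ := lt_of_not_ge hp2
      rw [norm_phi] at h1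
      nlinarith [Real.sq_sqrt (show (0:ℝ) ≤ ((Qf (a,b):ℤ):ℝ) by exact_mod_cast Qf_nonneg (a,b)),
        Real.sqrt_nonneg ((Qf (a,b):ℤ):ℝ), (show (0:ℝ) ≤ R - 1 by linarith)]
    set m : ℤ := 2*b + a with hm
    have hmsq : ((m:ℤ):ℝ)^2 = 4*((Qf (a,b):ℤ):ℝ) - 3*(a:ℝ)^2 := by
      push_cast [Qf, hm]
      ring
    have hxm : x a < (m:ℝ)^2 := by simp only [hx]; rw [hmsq]; nlinarith
    have hym : (m:ℝ)^2 ≤ y a := by simp only [hy]; rw [hmsq]; nlinarith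
    have hmem : m ∈ M a := by
      rcases lt_trichotomy m 0 with hm0 | hm0 | hm0
      · apply Finset.mem_union_left
        apply Finset.mem_union_right
        simp only [Finset.mem_Icc]
        have hmne : (m:ℝ) ≠ 0 := by exact_mod_cast (show m ≠ 0 by omega)
        have hmneg : (0:ℝ) < -(m:ℝ) := by
          rw [neg_pos]; exact_mod_cast hm0
        have hmt : -(m : ℝ) ≤ t a := by
          apply Real.le_sqrt_of_sq_le
          rw [show (-(m:ℝ))^2 = (m:ℝ)^2 by ring]
          exact le_max_of_le_left hym
        have hms : s a < -(m : ℝ) := by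
          rw [hs, Real.sqrt_lt' hmneg]
          rw [show (-(m:ℝ))^2 = (m:ℝ)^2 by ring]
          apply max_lt hxm
          positivity
        constructor
        · have h9 : ((-m : ℤ):ℝ) ≤ t a := by push_cast; exact hmt
          have := Int.le_floor.mpr h9
          omega
        · have h9 : (⌊s a⌋ : ℝ) < ((-m:ℤ):ℝ) := lt_of_le_of_lt (Int.floor_le _) (by push_cast; exact hms)
          have h10 : ⌊s a⌋ < -m := by exact_mod_cast h9
          omega
      · apply Finset.mem_union_right
        simp [hm0]
      · apply Finset.mem_union_left
        apply Finset.mem_union_left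
        simp only [Finset.mem_Icc]
        have hmne : (m:ℝ) ≠ 0 := by exact_mod_cast (show m ≠ 0 by omega)
        have hmpos : (0:ℝ) < (m:ℝ) := by exact_mod_cast hm0
        have hmt : (m : ℝ) ≤ t a := by
          apply Real.le_sqrt_of_sq_le
          exact le_max_of_le_left hym
        have hms : s a < (m : ℝ) := by
          rw [hs, Real.sqrt_lt' hmpos]
          apply max_lt hxm
          positivity
        constructor
        · have h9 : (⌊s a⌋ : ℝ) < ((m:ℤ):ℝ) := lt_of_le_of_lt (Int.floor_le _) hms
          have h10 : ⌊s a⌋ < m := by exact_mod_cast h9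
          omega
        · exact Int.le_floor.mpr hmt
    simp only [hT, Finset.coe_biUnion, Set.mem_iUnion, Finset.mem_coe]
    exact ⟨a, haK, by simp [Finset.mem_product, hmem]⟩
  -- card bound
  have hcard1 : (((AR R) \ (AR (R-1))).ncard : ℝ) ≤ (T.card : ℝ) := by
    have h1 : ((AR R) \ (AR (R-1))).ncard
        = ((fun p : ℤ × ℤ => (p.1, 2*p.2 + p.1)) '' ((AR R) \ (AR (R-1)))).ncard :=
      (Set.ncard_image_of_injective _ hinj).symm
    have h2 : ((fun p : ℤ × ℤ => (p.1, 2*p.2 + p.1)) '' ((AR R) \ (AR (R-1)))).ncard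
        ≤ (↑T : Set (ℤ × ℤ)).ncard := Set.ncard_le_ncard hsubset T.finite_toSet
    rw [Set.ncard_coe_finset] at h2
    rw [h1]
    exact_mod_cast h2
  -- per-column bound
  have hcol : ∀ a : ℤ, ((M a).card : ℝ) ≤ 9 * Real.sqrt R := by
    intro a
    have hsqR : 1 ≤ Real.sqrt R := by
      rw [show (1:ℝ) = Real.sqrt 1 by simp]
      exact Real.sqrt_le_sqrt hR
    have htdiff : t a - s a ≤ 3 * Real.sqrt R := by
      have h1 : t a - s a ≤ Real.sqrt ((t a)^2 - (s a)^2) := sub_le_sqrt_sq_sub (hs0 a) (hts a)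
      have h2 : (t a)^2 = max (y a) 0 := Real.sq_sqrt (le_max_right _ _)
      have h3 : (s a)^2 = max (x a) 0 := Real.sq_sqrt (le_max_right _ _)
      have h4 : (t a)^2 - (s a)^2 ≤ 9 * R := by
        rw [h2, h3]
        have hyx : y a - x a = 8*R - 4 := by simp only [hy, hx]; ring
        rcases le_or_gt (x a) 0 with h5 | h5
        · rcases le_or_gt (y a) 0 with h6 | h6
          · rw [max_eq_right h5, max_eq_right h6]; linarith
          · rw [max_eq_right h5, max_eq_left h6.le]; linarith
        · rw [max_eq_left h5.le, max_eq_left (by linarith : (0:ℝ) ≤ y a)]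
          linarith
      calc t a - s a ≤ Real.sqrt ((t a)^2 - (s a)^2) := h1
        _ ≤ Real.sqrt (9 * R) := Real.sqrt_le_sqrt h4
        _ = 3 * Real.sqrt R := by
            rw [show (9:ℝ)*R = 3^2 * R by ring, Real.sqrt_mul (by positivity), Real.sqrt_sq (by norm_num)]
    have hI1 : ((Finset.Icc (⌊s a⌋ + 1) ⌊t a⌋).card : ℝ) ≤ t a - s a + 1 :=
      count_Icc_real (hs0 a) (hts a)
    have hI2 : ((Finset.Icc (-⌊t a⌋) (-⌊s a⌋ - 1)).card : ℝ) ≤ t a - s a + 1 := by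
      have : (Finset.Icc (-⌊t a⌋) (-⌊s a⌋ - 1)).card = (Finset.Icc (⌊s a⌋ + 1) ⌊t a⌋).card := by
        rw [Int.card_Icc, Int.card_Icc]
        congr 1
        ring
      rw [this]
      exact hI1
    have hn : (M a).card ≤ (Finset.Icc (⌊s a⌋ + 1) ⌊t a⌋).card
        + (Finset.Icc (-⌊t a⌋) (-⌊s a⌋ - 1)).card + 1 := by
      simp only [hM]
      have u1 := Finset.card_union_le (Finset.Icc (⌊s a⌋ + 1) ⌊t a⌋ ∪ Finset.Icc (-⌊t a⌋) (-⌊s a⌋ - 1)) ({0} : Finset ℤ)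
      have u2 := Finset.card_union_le (Finset.Icc (⌊s a⌋ + 1) ⌊t a⌋) (Finset.Icc (-⌊t a⌋) (-⌊s a⌋ - 1))
      simp only [Finset.card_singleton] at u1
      omega
    have hMcard : ((M a).card : ℝ) ≤ (t a - s a + 1) + (t a - s a + 1) + 1 := by
      have hcast : ((M a).card : ℝ) ≤ ((Finset.Icc (⌊s a⌋ + 1) ⌊t a⌋).card : ℝ)
          + ((Finset.Icc (-⌊t a⌋) (-⌊s a⌋ - 1)).card : ℝ) + 1 := by exact_mod_cast hn
      linarith
    calc ((M a).card : ℝ) ≤ (t a - s a + 1) + (t a - s a + 1) + 1 := hMcard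
      _ ≤ (3*Real.sqrt R + 1) + (3*Real.sqrt R + 1) + 1 := by linarith
      _ ≤ 9 * Real.sqrt R := by linarith
  -- total
  have hIccK : ((Finset.Icc (-K) K).card : ℝ) ≤ 5 * R := by
    rw [Int.card_Icc]
    have hK0 : 0 ≤ K := Int.floor_nonneg.mpr (by linarith)
    have hKR : (K : ℝ) ≤ 2*R := Int.floor_le _
    have h0 : ((K + 1 - -K).toNat : ℤ) = 2*K + 1 := by
      rw [Int.toNat_of_nonneg (by omega)]; ring
    have h1 : (((K + 1 - -K).toNat : ℕ) : ℝ) = 2*(K:ℝ) + 1 := by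
      exact_mod_cast congrArg (fun z : ℤ => (z : ℝ)) h0
    rw [h1]
    linarith
  have hTcard : ((T.card) : ℝ) ≤ 5 * R * (9 * Real.sqrt R) := by
    have h1 : T.card ≤ ∑ a ∈ Finset.Icc (-K) K, (({a} : Finset ℤ) ×ˢ M a).card :=
      Finset.card_biUnion_le
    have h2 : ∀ a : ℤ, (({a} : Finset ℤ) ×ˢ M a).card = (M a).card := by
      intro a
      rw [Finset.card_product, Finset.card_singleton, one_mul]
    have h3 : ((T.card) : ℝ) ≤ ∑ a ∈ Finset.Icc (-K) K, ((M a).card : ℝ) := by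
      calc ((T.card) : ℝ) ≤ ((∑ a ∈ Finset.Icc (-K) K, (({a} : Finset ℤ) ×ˢ M a).card : ℕ) : ℝ) := by
            exact_mod_cast h1
        _ = ∑ a ∈ Finset.Icc (-K) K, ((M a).card : ℝ) := by
            push_cast
            exact Finset.sum_congr rfl fun a _ => by rw [h2]
    calc ((T.card) : ℝ) ≤ ∑ a ∈ Finset.Icc (-K) K, ((M a).card : ℝ) := h3
      _ ≤ ∑ _a ∈ Finset.Icc (-K) K, (9 * Real.sqrt R) := Finset.sum_le_sum fun a _ => hcol a
      _ = ((Finset.Icc (-K) K).card : ℝ) * (9 * Real.sqrt R) := by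
          rw [Finset.sum_const, nsmul_eq_mul]
      _ ≤ 5 * R * (9 * Real.sqrt R) := by
          have : (0:ℝ) ≤ 9 * Real.sqrt R := by positivity
          nlinarith [hIccK]
  calc (((AR R) \ (AR (R-1))).ncard : ℝ) ≤ (T.card : ℝ) := hcard1
    _ ≤ 5 * R * (9 * Real.sqrt R) := hTcard
    _ = 45 * R * Real.sqrt R := by ring

lemma ball_ncard (R : ℝ) : (triLatticeBall R).ncard = (AR R).ncard := by
  rw [show triLatticeBall R = phi '' AR R from ball_eq_image R,
    Set.ncard_image_of_injective _ phi_injective]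

lemma tangency_eq (R : ℝ) : tangencyCount R = (DR R).ncard + (AR R).ncard := by
  unfold tangencyCount
  rw [ball_ncard]
  congr 1
  have h1 : {S : Set (EuclideanSpace ℝ (Fin 2)) |
      ∃ p q, p ∈ triLatticeBall R ∧ q ∈ triLatticeBall R ∧ p ≠ q ∧ ‖p - q‖ = 1 ∧
        S = {p, q}} = fedge '' DR R := by
    rw [fedge_image]
    unfold triLatticeBall
    rw [ball_eq_image]
  rw [h1, Set.ncard_image_of_injective _ fedge_injective]

lemma main_bounds {R : ℝ} (hR : 2 ≤ R) :
    4 - 556 / Real.sqrt R ≤ ((tangencyCount R : ℝ) / (horoCount R : ℝ))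
    ∧ ((tangencyCount R : ℝ) / (horoCount R : ℝ)) ≤ 4 := by
  have hR1 : (1:ℝ) ≤ R := by linarith
  set nR : ℝ := ((AR R).ncard : ℝ) with hnR
  set nR' : ℝ := ((AR (R-1)).ncard : ℝ) with hnR'
  set eR : ℝ := ((DR R).ncard : ℝ) with heR
  have hball : ((triLatticeBall R).ncard : ℝ) = nR := by rw [ball_ncard]
  have htang : ((tangencyCount R : ℕ) : ℝ) = eR + nR := by rw [tangency_eq]; push_cast; ring
  have hhoro : ((horoCount R : ℕ) : ℝ) = nR + 1 := by
    unfold horoCount; push_cast; rw [hball]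
  have hn1 : (R-1)^2 ≤ nR := ncard_AR_lower hR1
  have hnpos : (0:ℝ) < nR + 1 := by nlinarith
  have he2 : eR ≤ 3 * nR := by rw [heR, hnR]; exact_mod_cast DR_card_le R
  -- lower bound on eR
  have hsub : AR (R-1) ⊆ AR R := by
    intro p hp
    have hp' : ‖phi p‖ ≤ R - 1 := hp
    show ‖phi p‖ ≤ R
    linarith
  have hdiff : ((AR R \ AR (R-1)).ncard : ℝ) = nR - nR' := by
    rw [Set.ncard_diff hsub ((AR_finite (R-1)))]
    have hle : (AR (R-1)).ncard ≤ (AR R).ncard := Set.ncard_le_ncard hsub (AR_finite R)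
    push_cast [Nat.cast_sub hle]
    ring
  have hann : nR - nR' ≤ 45 * R * Real.sqrt R := by
    rw [← hdiff]; exact ann_bound hR1
  have he3 : 3 * nR' ≤ eR := by rw [heR, hnR']; exact_mod_cast DR_card_ge R
  have he4 : 4 * (nR + 1) - (135 * R * Real.sqrt R + 4) ≤ eR + nR := by nlinarith
  have hsq1 : 1 ≤ Real.sqrt R := by
    rw [show (1:ℝ) = Real.sqrt 1 by simp]
    exact Real.sqrt_le_sqrt hR1
  have hsqR : Real.sqrt R ≤ R := by
    nlinarith [Real.sq_sqrt (show (0:ℝ) ≤ R by linarith), Real.sqrt_nonneg R]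
  have hsqpos : (0:ℝ) < Real.sqrt R := by linarith
  have hDle : (135 * R * Real.sqrt R + 4) ≤ (556 / Real.sqrt R) * (nR + 1) := by
    rw [div_mul_eq_mul_div, le_div_iff₀ hsqpos]
    have hRsq : Real.sqrt R * Real.sqrt R = R := Real.mul_self_sqrt (by linarith)
    have h1 : (135 * R * Real.sqrt R + 4) * Real.sqrt R = 135 * R^2 + 4 * Real.sqrt R := by
      have e : (135 * R * Real.sqrt R + 4) * Real.sqrt R
          = 135 * R * (Real.sqrt R * Real.sqrt R) + 4 * Real.sqrt R := by ring
      rw [e, hRsq]; ring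
    rw [h1]
    have h2 : (R-1)^2 ≥ R^2/4 := by nlinarith
    nlinarith
  constructor
  · rw [htang, hhoro, le_div_iff₀ hnpos]
    have hexp : (4 - 556/Real.sqrt R) * (nR+1)
        = 4*(nR+1) - (556/Real.sqrt R)*(nR+1) := by ring
    rw [hexp]
    linarith
  · rw [htang, hhoro, div_le_iff₀ hnpos]
    linarith

lemma sqrt_tendsto_atTop : Filter.Tendsto Real.sqrt Filter.atTop Filter.atTop := by
  apply Filter.tendsto_atTop.mpr
  intro b
  filter_upwards [Filter.eventually_ge_atTop (b^2)] with R hRb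
  exact Real.le_sqrt_of_sq_le hRb

/-- for the triangular-lattice horosphere packing, the ratio
`m(R)/n(R)` tends to `4` as `R → ∞`. -/
theorem tangencyCount_div_horoCount_tendsto_four :
    Filter.Tendsto (fun R : ℝ => (tangencyCount R : ℝ) / (horoCount R : ℝ))
      Filter.atTop (nhds 4) := by
  have hlow : Filter.Tendsto (fun R : ℝ => 4 - 556 / Real.sqrt R) Filter.atTop (nhds 4) := by
    have h0 : Filter.Tendsto (fun R : ℝ => 556 / Real.sqrt R) Filter.atTop (nhds 0) :=
      Filter.Tendsto.div_atTop tendsto_const_nhds sqrt_tendsto_atTop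
    have := Filter.Tendsto.sub (tendsto_const_nhds (x := (4:ℝ)) (f := Filter.atTop)) h0
    simpa using this
  apply tendsto_of_tendsto_of_tendsto_of_le_of_le' hlow tendsto_const_nhds
  · filter_upwards [Filter.eventually_ge_atTop (2:ℝ)] with R hR
    exact (main_bounds hR).1
  · filter_upwards [Filter.eventually_ge_atTop (2:ℝ)] with R hR
    exact (main_bounds hR).2
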